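/- arXiv:1605.02933 — 6 statements merged into one kernel-verified Lean document; each statement's English description precedes it below -/
import Mathlib

section
/- Suppose τ > 0, n > 1 are real numbers and [S], [SS], [SI] : [0,∞) → ℝ are functions with [S] differentiable and strictly positive, [SS] differentiable and strictly positive, [SI] continuous, satisfying [S]'(t) = -τ·[SI](t) and [SS]'(t) = -2τ·((n-1)/n)·[SS](t)·[SI](t)/[S](t) for all t ≥ 0. Then the function U(t) = [SS](t)/[S](t)^{2(n-1)/n} is constant on [0,∞), i.e. U(t) = U(0) for all t ≥ 0. -/
open Real MeasureTheory

/-- The function `U(t) = [SS](t) / [S](t)^{2(n-1)/n}` is a first integral of the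
pairwise SIR model: it is constant on `[0,∞)`. -/
theorem pairwise_first_integral
    (τ n : ℝ) (hτ : 0 < τ) (hn : 1 < n)
    (S SS SI : ℝ → ℝ)
    (hSpos : ∀ t ≥ (0:ℝ), 0 < S t)
    (hSSpos : ∀ t ≥ (0:ℝ), 0 < SS t)
    (hSIcont : ContinuousOn SI (Set.Ici 0))
    (hS' : ∀ t ≥ (0:ℝ), HasDerivAt S (-τ * SI t) t)
    (hSS' : ∀ t ≥ (0:ℝ),
      HasDerivAt SS (-2 * τ * ((n - 1) / n) * SS t * SI t / S t) t) :
    ∀ t ≥ (0:ℝ), SS t / S t ^ (2 * (n - 1) / n) = SS 0 / S 0 ^ (2 * (n - 1) / n) := by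
  set c : ℝ := 2 * (n - 1) / n with hc
  clear_value c
  set U : ℝ → ℝ := fun t => SS t / S t ^ c with hU
  have hn0 : n ≠ 0 := by linarith
  have key : ∀ x ≥ (0:ℝ), HasDerivAt U 0 x := by
    intro x hx
    have hSx : 0 < S x := hSpos x hx
    have hSxne : S x ≠ 0 := hSx.ne'
    have hpow : HasDerivAt (fun t => S t ^ c)
        ((-τ * SI x) * c * S x ^ (c - 1)) x :=
      (hS' x hx).rpow_const (Or.inl hSxne)
    have hpowne : S x ^ c ≠ 0 := (Real.rpow_pos_of_pos hSx c).ne'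
    have hdiv := (hSS' x hx).div hpow hpowne
    have heq : (-2 * τ * ((n - 1) / n) * SS x * SI x / S x * S x ^ c -
        SS x * ((-τ * SI x) * c * S x ^ (c - 1))) / (S x ^ c) ^ 2 = 0 := by
      have h1 : S x ^ (c - 1) = S x ^ c / S x := by
        rw [Real.rpow_sub hSx, Real.rpow_one]
      have hcoef : -2 * τ * ((n - 1) / n) = -τ * c := by rw [hc]; ring
      rw [h1, hcoef]
      field_simp
      ring
    rw [heq] at hdiv
    exact hdiv
  intro t ht
  have := constant_of_has_deriv_right_zero (f := U) (a := 0) (b := t)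
    (fun x hx => ((key x hx.1).continuousAt).continuousWithinAt)
    (fun x hx => (key x hx.1).hasDerivWithinAt)
  exact this t (Set.right_mem_Icc.2 ht)
end

section
/- Suppose τ > 0, n > 1, N > 0 are real numbers and [S], [SS], [SI] : [0,∞) → ℝ are functions with [S] differentiable and strictly positive, [SS] differentiable and strictly positive, [SI] continuous, satisfying [S]'(t) = -τ·[SI](t) and [SS]'(t) = -2τ·((n-1)/n)·[SS](t)·[SI](t)/[S](t) for all t ≥ 0, and with the initial condition [SS](0) = (n/N)·[S](0)². Then for all t ≥ 0 one has [SS](t) = (n/N)·[S](0)^{2/n}·[S](t)^{2(n-1)/n}. -/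
open Real MeasureTheory

/-- Using the first integral of the pairwise SIR model together with the initial
condition `[SS](0) = (n/N)·[S](0)²`, we obtain
`[SS](t) = (n/N)·[S](0)^{2/n}·[S](t)^{2(n-1)/n}` for all `t ≥ 0`. -/
theorem pairwise_first_integral_formula
    (τ n N : ℝ) (hτ : 0 < τ) (hn : 1 < n) (hN : 0 < N)
    (S SS SI : ℝ → ℝ)
    (hSpos : ∀ t ≥ (0:ℝ), 0 < S t)
    (hSSpos : ∀ t ≥ (0:ℝ), 0 < SS t)
    (hSIcont : ContinuousOn SI (Set.Ici 0))
    (hS' : ∀ t ≥ (0:ℝ), HasDerivAt S (-τ * SI t) t)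
    (hSS' : ∀ t ≥ (0:ℝ),
      HasDerivAt SS (-2 * τ * ((n - 1) / n) * SS t * SI t / S t) t)
    (hinit : SS 0 = (n / N) * S 0 ^ 2) :
    ∀ t ≥ (0:ℝ), SS t = (n / N) * S 0 ^ (2 / n) * S t ^ (2 * (n - 1) / n) := by
  have hn0 : (0:ℝ) < n := lt_trans one_pos hn
  set α : ℝ := 2 * (n - 1) / n with hα
  have hg : ∀ x ≥ (0:ℝ), HasDerivAt (fun s => SS s * S s ^ (-α)) 0 x := by
    intro x hx
    have hSx := hSpos x hx
    have h1 : HasDerivAt (fun s => S s ^ (-α))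
        ((-τ * SI x) * (-α) * S x ^ (-α - 1)) x :=
      (hS' x hx).rpow_const (Or.inl hSx.ne')
    have h2 := (hSS' x hx).mul h1
    refine h2.congr_deriv ?_
    have hsub : S x ^ (-α - 1) = S x ^ (-α) / S x := by
      rw [Real.rpow_sub hSx, Real.rpow_one]
    rw [hsub, hα]
    field_simp
    ring
  intro t ht
  have key : ∀ x ∈ Set.Icc (0:ℝ) t,
      SS x * S x ^ (-α) = SS 0 * S 0 ^ (-α) := by
    apply constant_of_has_deriv_right_zero
    · intro x hx
      exact (hg x hx.1).continuousAt.continuousWithinAt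
    · intro x hx
      exact (hg x hx.1).hasDerivWithinAt
  have hkt := key t ⟨ht, le_rfl⟩
  have hSt := hSpos t ht
  have hS0 := hSpos 0 le_rfl
  have hStα : S t ^ (-α) * S t ^ α = 1 := by
    rw [← Real.rpow_add hSt]; simp
  have : SS t = SS 0 * S 0 ^ (-α) * S t ^ α := by
    have := congrArg (fun y => y * S t ^ α) hkt
    simpa [mul_assoc, hStα] using this
  rw [this, hinit]
  have h02 : (n / N) * S 0 ^ 2 * S 0 ^ (-α) = (n / N) * S 0 ^ (2 / n) := by
    rw [mul_assoc]
    congr 1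
    rw [← Real.rpow_natCast (S 0) 2, ← Real.rpow_add hS0]
    congr 1
    rw [hα]
    field_simp
    ring
  rw [h02]
end

section
/- Let τ > 0, κ ∈ ℝ and n > 1 be real numbers, and let S, σ : [0,∞) → ℝ with S differentiable, S(t) > 0 for all t, σ continuous and nonnegative, S'(t) = -τ·σ(t), and suppose S∞ = lim_{t→∞} S(t) exists with S∞ > 0. Then ∫₀^∞ ∫₀ᵘ τκ·S(c)^{−1/n}·σ(c)·e^{τc}·e^{−τu} dc du = −(κ/τ)·(n/(n−1))·(S∞^{(n−1)/n} − S(0)^{(n−1)/n}), provided the iterated integral is finite. -/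
open Real MeasureTheory Filter intervalIntegral

/-- Computation of the integral `I₂` in the proof of the pairwise final size
relation: `∫₀^∞ ∫₀ᵘ τκ·S(c)^{−1/n}·σ(c)·e^{τc}·e^{−τu} dc du
  = −(κ/τ)·(n/(n−1))·(S∞^{(n−1)/n} − S(0)^{(n−1)/n})`. -/
theorem pairwise_integral_I2
    (τ κ n : ℝ) (hτ : 0 < τ) (hn : 1 < n)
    (S σ : ℝ → ℝ)
    (hSpos : ∀ t, 0 < S t)
    (hσcont : Continuous σ) (hσnonneg : ∀ t, 0 ≤ σ t)
    (hS' : ∀ t, HasDerivAt S (-τ * σ t) t)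
    (Sinf : ℝ) (hSinf_lim : Tendsto S atTop (nhds Sinf)) (hSinf_pos : 0 < Sinf)
    (hint : IntegrableOn (fun u =>
      ∫ c in (0:ℝ)..u,
        τ * κ * S c ^ (-(1 : ℝ) / n) * σ c * Real.exp (τ * c) * Real.exp (-τ * u))
      (Set.Ioi 0)) :
    ∫ u in Set.Ioi (0:ℝ), ∫ c in (0:ℝ)..u,
        τ * κ * S c ^ (-(1 : ℝ) / n) * σ c * Real.exp (τ * c) * Real.exp (-τ * u) =
      -(κ / τ) * (n / (n - 1)) * (Sinf ^ ((n - 1) / n) - S 0 ^ ((n - 1) / n)) := by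
  have hScont : Continuous S := continuous_iff_continuousAt.2 fun t => (hS' t).continuousAt
  have hn0 : (0:ℝ) < n := one_pos.trans hn
  have hn1 : (0:ℝ) < n - 1 := sub_pos.2 hn
  set p : ℝ := (n - 1) / n with hpdef
  have hp1 : p - 1 = -(1:ℝ)/n := by
    rw [hpdef]; field_simp; ring
  set c0 : ℝ := n / ((n - 1) * τ) with hc0
  have hc0pos : 0 < c0 := by positivity
  set h : ℝ → ℝ := fun t => S t ^ (-(1:ℝ)/n) * σ t with hh
  have hhcont : Continuous h :=
    (hScont.rpow_const fun t => Or.inl (hSpos t).ne').mul hσcont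
  have hhnn : ∀ t, 0 ≤ h t := fun t =>
    mul_nonneg (Real.rpow_nonneg (hSpos t).le _) (hσnonneg t)
  -- antiderivative of h
  have hGderiv : ∀ t, HasDerivAt (fun t => -c0 * S t ^ p) (h t) t := by
    intro t
    have h1 := ((hS' t).rpow_const (p := p) (Or.inl (hSpos t).ne')).const_mul (-c0)
    convert h1 using 1
    · rfl
    · rfl
    rw [hp1, hh]
    rw [show -c0 * (-τ * σ t * p * S t ^ (-(1:ℝ)/n)) = (c0*τ*p) * (S t ^ (-(1:ℝ)/n) * σ t) from by ring,
      show c0*τ*p = 1 from by rw [hc0, hpdef]; field_simp, one_mul]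
  have hFTC : ∀ a b : ℝ, ∫ t in a..b, h t = -c0 * S b ^ p - (-c0 * S a ^ p) := fun a b =>
    intervalIntegral.integral_eq_sub_of_hasDerivAt (fun t _ => hGderiv t)
      (hhcont.intervalIntegrable a b)
  -- the inner integrand without the exp(-τu) factor
  set k : ℝ → ℝ := fun c => h c * Real.exp (τ * c) with hk
  have hkcont : Continuous k := hhcont.mul (Real.continuous_exp.comp (continuous_const.mul continuous_id))
  have hknn : ∀ t, 0 ≤ k t := fun t => mul_nonneg (hhnn t) (Real.exp_pos _).le
  set X : ℝ → ℝ := fun u => ∫ c in (0:ℝ)..u, k c with hX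
  -- key decay bound
  have hSp_nn : ∀ t, (0:ℝ) ≤ S t ^ p := fun t => Real.rpow_nonneg (hSpos t).le _
  have key : ∀ u : ℝ, 0 ≤ u → X u * Real.exp (-τ*u) ≤
      Real.exp (-(τ*u)/2) * (c0 * S 0 ^ p) + (c0 * S (u/2) ^ p - c0 * S u ^ p) := by
    intro u hu
    have hu2 : (0:ℝ) ≤ u/2 := by linarith
    have hu2u : u/2 ≤ u := by linarith
    have hsplit : X u = (∫ c in (0:ℝ)..(u/2), k c) + ∫ c in (u/2)..u, k c :=
      (intervalIntegral.integral_add_adjacent_intervals (hkcont.intervalIntegrable _ _)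
        (hkcont.intervalIntegrable _ _)).symm
    have hA1 : (∫ c in (0:ℝ)..(u/2), k c) ≤ Real.exp (τ*(u/2)) * (c0 * S 0 ^ p) := by
      have hmono : (∫ c in (0:ℝ)..(u/2), k c) ≤ ∫ c in (0:ℝ)..(u/2), h c * Real.exp (τ*(u/2)) := by
        apply intervalIntegral.integral_mono_on hu2 (hkcont.intervalIntegrable _ _)
          ((hhcont.mul continuous_const).intervalIntegrable _ _)
        intro c hc
        exact mul_le_mul_of_nonneg_left
          (Real.exp_le_exp.2 (mul_le_mul_of_nonneg_left hc.2 hτ.le)) (hhnn c)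
      have : (∫ c in (0:ℝ)..(u/2), h c * Real.exp (τ*(u/2))) =
          (-c0 * S (u/2) ^ p - (-c0 * S 0 ^ p)) * Real.exp (τ*(u/2)) := by
        rw [intervalIntegral.integral_mul_const, hFTC]
      rw [this] at hmono
      refine hmono.trans ?_
      rw [mul_comm (Real.exp (τ*(u/2)))]
      apply mul_le_mul_of_nonneg_right _ (Real.exp_pos _).le
      nlinarith [hSp_nn (u/2), hSp_nn 0]
    have hA2 : (∫ c in (u/2)..u, k c) ≤ (c0 * S (u/2) ^ p - c0 * S u ^ p) * Real.exp (τ*u) := by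
      have hmono : (∫ c in (u/2)..u, k c) ≤ ∫ c in (u/2)..u, h c * Real.exp (τ*u) := by
        apply intervalIntegral.integral_mono_on hu2u (hkcont.intervalIntegrable _ _)
          ((hhcont.mul continuous_const).intervalIntegrable _ _)
        intro c hc
        exact mul_le_mul_of_nonneg_left
          (Real.exp_le_exp.2 (mul_le_mul_of_nonneg_left hc.2 hτ.le)) (hhnn c)
      have : (∫ c in (u/2)..u, h c * Real.exp (τ*u)) =
          (-c0 * S u ^ p - (-c0 * S (u/2) ^ p)) * Real.exp (τ*u) := by
        rw [intervalIntegral.integral_mul_const, hFTC]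
      rw [this] at hmono
      refine hmono.trans (le_of_eq ?_)
      ring
    have e1 : Real.exp (τ*(u/2)) * Real.exp (-τ*u) = Real.exp (-(τ*u)/2) := by
      rw [← Real.exp_add]; congr 1; ring
    have e2 : Real.exp (τ*u) * Real.exp (-τ*u) = 1 := by
      rw [← Real.exp_add, show τ*u + -τ*u = 0 from by ring, Real.exp_zero]
    calc X u * Real.exp (-τ*u)
        ≤ (Real.exp (τ*(u/2)) * (c0 * S 0 ^ p) +
            (c0 * S (u/2) ^ p - c0 * S u ^ p) * Real.exp (τ*u)) * Real.exp (-τ*u) := by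
          rw [hsplit]
          exact mul_le_mul_of_nonneg_right (add_le_add hA1 hA2) (Real.exp_pos _).le
      _ = Real.exp (-(τ*u)/2) * (c0 * S 0 ^ p) + (c0 * S (u/2) ^ p - c0 * S u ^ p) := by
          rw [add_mul]
          congr 1
          · rw [mul_right_comm, e1]
          · rw [mul_assoc, e2, mul_one]
  -- the bound tends to 0
  have half_tendsto : Tendsto (fun u : ℝ => u/2) atTop atTop :=
    tendsto_id.atTop_div_const two_pos
  have hexp0 : Tendsto (fun u : ℝ => Real.exp (-(τ*u)/2)) atTop (nhds 0) := by
    apply Real.tendsto_exp_atBot.comp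
    have h1 : Tendsto (fun u : ℝ => τ*u/2) atTop atTop :=
      (Tendsto.const_mul_atTop hτ tendsto_id).atTop_div_const two_pos
    have := tendsto_neg_atTop_atBot.comp h1
    refine this.congr fun u => ?_
    simp [Function.comp, neg_div]
  have hSp_half : Tendsto (fun u => S (u/2) ^ p) atTop (nhds (Sinf ^ p)) :=
    (hSinf_lim.comp half_tendsto).rpow_const (Or.inl hSinf_pos.ne')
  have hSp_full : Tendsto (fun u => S u ^ p) atTop (nhds (Sinf ^ p)) :=
    hSinf_lim.rpow_const (Or.inl hSinf_pos.ne')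
  have hbound0 : Tendsto (fun u => Real.exp (-(τ*u)/2) * (c0 * S 0 ^ p) +
      (c0 * S (u/2) ^ p - c0 * S u ^ p)) atTop (nhds 0) := by
    have := (hexp0.mul_const (c0 * S 0 ^ p)).add
      (((hSp_half.const_mul c0).sub (hSp_full.const_mul c0)))
    simpa using this
  -- X u * exp(-τu) → 0
  have hXnn : ∀ u : ℝ, 0 ≤ u → 0 ≤ X u * Real.exp (-τ*u) := fun u hu =>
    mul_nonneg (intervalIntegral.integral_nonneg hu fun c _ => hknn c) (Real.exp_pos _).le
  have hXdecay : Tendsto (fun u => X u * Real.exp (-τ*u)) atTop (nhds 0) := by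
    apply tendsto_of_tendsto_of_tendsto_of_le_of_le' tendsto_const_nhds hbound0
    · filter_upwards [eventually_ge_atTop (0:ℝ)] with u hu using hXnn u hu
    · filter_upwards [eventually_ge_atTop (0:ℝ)] with u hu using key u hu
  -- F and its relation to X
  set g : ℝ → ℝ := fun c => τ * κ * S c ^ (-(1 : ℝ) / n) * σ c * Real.exp (τ * c) with hg
  have hgcont : Continuous g :=
    (((continuous_const.mul (hScont.rpow_const fun t => Or.inl (hSpos t).ne')).mul hσcont).mul
      (Real.continuous_exp.comp (continuous_const.mul continuous_id)))
  set F : ℝ → ℝ := fun u => ∫ c in (0:ℝ)..u, g c with hF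
  have hFX : ∀ u, F u = τ * κ * X u := by
    intro u
    rw [hF, hX]
    rw [show (fun c => g c) = fun c => τ * κ * k c by funext c; rw [hg, hk, hh]; ring]
    exact intervalIntegral.integral_const_mul _ _
  have hF' : ∀ u, HasDerivAt F (g u) u := fun u =>
    intervalIntegral.integral_hasDerivAt_right (hgcont.intervalIntegrable _ _)
      (hgcont.stronglyMeasurableAtFilter _ _) hgcont.continuousAt
  have hFdecay : Tendsto (fun u => F u * Real.exp (-τ*u)) atTop (nhds 0) := by
    have := hXdecay.const_mul (τ * κ)
    rw [mul_zero] at this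
    refine this.congr fun u => ?_
    rw [hFX]; ring
  -- Φ and its derivative
  set Φ : ℝ → ℝ := fun u => -(F u * Real.exp (-τ*u))/τ - (κ * c0) * (S u ^ p - S 0 ^ p) with hΦdef
  have hexp' : ∀ u : ℝ, HasDerivAt (fun u => Real.exp (-τ*u)) (Real.exp (-τ*u) * (-τ)) u := by
    intro u
    have : HasDerivAt (fun u : ℝ => -τ*u) (-τ) u := by
      simpa using (hasDerivAt_id u).const_mul (-τ)
    exact this.exp
  have hΦ' : ∀ u, HasDerivAt Φ (F u * Real.exp (-τ*u)) u := by
    intro u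
    have hd1 : HasDerivAt (fun u => -(F u * Real.exp (-τ*u))/τ)
        (-(g u * Real.exp (-τ*u) + F u * (Real.exp (-τ*u) * (-τ)))/τ) u :=
      (((hF' u).mul (hexp' u)).neg).div_const τ
    have hd2 : HasDerivAt (fun u => (κ * c0) * (S u ^ p - S 0 ^ p))
        ((κ * c0) * ((-τ * σ u) * p * S u ^ (p-1))) u := by
      have := (((hS' u).rpow_const (p := p) (Or.inl (hSpos u).ne')).sub_const (S 0 ^ p)).const_mul
        (κ * c0)
      exact this
    have := hd1.sub hd2
    convert this using 1
    · rfl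
    · rfl
    · rfl
    rw [hp1, hg, hc0, hpdef]
    have hexpne : Real.exp (τ*u) ≠ 0 := (Real.exp_pos _).ne'
    have hee : Real.exp (-τ*u) = (Real.exp (τ*u))⁻¹ := by
      rw [← Real.exp_neg]; congr 1; ring
    rw [hee]
    field_simp
    ring
  -- limit of Φ
  have hΦlim : Tendsto Φ atTop (nhds (-(κ * c0 * (Sinf ^ p - S 0 ^ p)))) := by
    have h1 : Tendsto (fun u => -(F u * Real.exp (-τ*u))/τ) atTop (nhds 0) := by
      have := (hFdecay.neg).div_const τ
      simpa using this
    have h2 : Tendsto (fun u => (κ * c0) * (S u ^ p - S 0 ^ p)) atTop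
        (nhds ((κ * c0) * (Sinf ^ p - S 0 ^ p))) :=
      (hSp_full.sub_const (S 0 ^ p)).const_mul (κ * c0)
    have h3 := h1.sub h2
    rw [zero_sub] at h3
    exact h3
  -- rewrite the integrand
  have hinteq : (fun u => ∫ c in (0:ℝ)..u,
      τ * κ * S c ^ (-(1 : ℝ) / n) * σ c * Real.exp (τ * c) * Real.exp (-τ * u)) =
      fun u => F u * Real.exp (-τ*u) := by
    funext u
    rw [hF, hg]
    exact intervalIntegral.integral_mul_const _ _
  rw [hinteq]
  rw [hinteq] at hint
  have hmain := MeasureTheory.integral_Ioi_of_hasDerivAt_of_tendsto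
    (f := Φ) (f' := fun u => F u * Real.exp (-τ*u)) (a := 0)
    (hΦ' 0).continuousAt.continuousWithinAt (fun x _ => hΦ' x) hint hΦlim
  rw [hmain]
  have hΦ0 : Φ 0 = 0 := by
    rw [hΦdef]
    simp [hF, intervalIntegral.integral_same]
  rw [hΦ0, sub_zero]
  have hfin : ∀ A : ℝ, -(κ * c0 * A) = -(κ/τ) * (n/(n-1)) * A := by
    intro A
    rw [hc0, div_eq_mul_inv, mul_inv]
    ring
  rw [hfin]
end

section
/- Let τ > 0, κ ∈ ℝ and n > 1 be real numbers, let f : [0,∞) → [0,∞) be measurable with ∫₀^∞ f(a)·e^{−τa} da < ∞, and let S, σ : [0,∞) → ℝ with S differentiable, S(t) > 0 for all t, σ continuous and nonnegative, S'(t) = -τ·σ(t), and suppose S∞ = lim_{t→∞} S(t) exists with S∞ > 0. Then ∫₀^∞ ∫₀ᵘ ∫₀ᶜ τκ·S(c−a)^{−1/n}·σ(c−a)·f(a)·e^{−τa}·e^{τc}·e^{−τu} da dc du = −(κ/τ)·(n/(n−1))·(S∞^{(n−1)/n} − S(0)^{(n−1)/n})·∫₀^∞ f(a)·e^{−τa}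 da, provided the iterated integral is finite. -/
open Real MeasureTheory Filter intervalIntegral
set_option maxHeartbeats 1000000

/-- Computation of the integral `I₃` in the proof of the pairwise final size
relation: `∫₀^∞ ∫₀ᵘ ∫₀ᶜ τκ·S(c−a)^{−1/n}·σ(c−a)·f(a)·e^{−τa}·e^{τc}·e^{−τu} da dc du
  = −(κ/τ)·(n/(n−1))·(S∞^{(n−1)/n} − S(0)^{(n−1)/n})·∫₀^∞ f(a)e^{−τa} da`. -/
theorem pairwise_integral_I3
    (τ κ n : ℝ) (hτ : 0 < τ) (hn : 1 < n)
    (f : ℝ → ℝ) (hf_meas : Measurable f) (hf_nonneg : ∀ a ≥ (0:ℝ), 0 ≤ f a)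
    (hf_lap : IntegrableOn (fun a => f a * Real.exp (-τ * a)) (Set.Ioi 0))
    (S σ : ℝ → ℝ)
    (hSpos : ∀ t, 0 < S t)
    (hσcont : Continuous σ) (hσnonneg : ∀ t, 0 ≤ σ t)
    (hS' : ∀ t, HasDerivAt S (-τ * σ t) t)
    (Sinf : ℝ) (hSinf_lim : Tendsto S atTop (nhds Sinf)) (hSinf_pos : 0 < Sinf)
    (hint : IntegrableOn (fun u =>
      ∫ c in (0:ℝ)..u, ∫ a in (0:ℝ)..c,
        τ * κ * S (c - a) ^ (-(1 : ℝ) / n) * σ (c - a) * f a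
          * Real.exp (-τ * a) * Real.exp (τ * c) * Real.exp (-τ * u))
      (Set.Ioi 0)) :
    ∫ u in Set.Ioi (0:ℝ), ∫ c in (0:ℝ)..u, ∫ a in (0:ℝ)..c,
        τ * κ * S (c - a) ^ (-(1 : ℝ) / n) * σ (c - a) * f a
          * Real.exp (-τ * a) * Real.exp (τ * c) * Real.exp (-τ * u) =
      -(κ / τ) * (n / (n - 1)) * (Sinf ^ ((n - 1) / n) - S 0 ^ ((n - 1) / n))
        * ∫ a in Set.Ioi (0:ℝ), f a * Real.exp (-τ * a) := by
  -- trivial case κ = 0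
  rcases eq_or_ne κ 0 with hκ | hκ
  · simp [hκ, mul_assoc]
  have hτ0 : τ ≠ 0 := hτ.ne'
  have hτκ : τ * κ ≠ 0 := mul_ne_zero hτ0 hκ
  have hn0 : n ≠ 0 := by positivity
  have hn1 : n - 1 ≠ 0 := by intro h; nlinarith
  -- basic objects
  set E : ℝ → ℝ := fun a => f a * Real.exp (-τ * a) with hEdef
  set A : ℝ := ∫ a in Set.Ioi (0:ℝ), E a with hAdef
  have hE_meas : Measurable E := hf_meas.mul (Real.measurable_exp.comp (measurable_id.const_mul _))
  have hE_nonneg : ∀ a, 0 < a → 0 ≤ E a := fun a ha =>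
    mul_nonneg (hf_nonneg a ha.le) (Real.exp_pos _).le
  set h : ℝ → ℝ := fun t => S t ^ (-(1:ℝ)/n) * σ t with hhdef
  have hScont : Continuous S := by
    rw [continuous_iff_continuousAt]; exact fun t => (hS' t).continuousAt
  have hhcont : Continuous h := by
    exact (hScont.rpow_const (fun t => Or.inl (hSpos t).ne')).mul hσcont
  have hh_nonneg : ∀ t, 0 ≤ h t := fun t =>
    mul_nonneg (Real.rpow_nonneg (hSpos t).le _) (hσnonneg t)
  -- FTC : value and integrability of ∫ h over (0,∞)
  set C : ℝ := ∫ t in Set.Ioi (0:ℝ), h t with hCdef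
  have hFTC : C = (n / (n-1)) / τ * (S 0 ^ ((n-1)/n) - Sinf ^ ((n-1)/n)) ∧
      IntegrableOn h (Set.Ioi (0:ℝ)) := by
    set p : ℝ := (n-1)/n with hp
    set g : ℝ → ℝ := fun t => -((n/(n-1))/τ) * S t ^ p with hg
    have hderiv : ∀ t, HasDerivAt g (h t) t := by
      intro t
      have h1 : HasDerivAt (fun t => S t ^ p) ((-τ * σ t) * p * S t ^ (p - 1)) t :=
        (hS' t).rpow_const (Or.inl (hSpos t).ne')
      have h2 := h1.const_mul (-((n/(n-1))/τ))
      refine h2.congr_deriv ?_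
      have hpe : p - 1 = -(1:ℝ)/n := by rw [hp]; field_simp; ring
      rw [hhdef, hpe, hp]
      field_simp
    have htend : Tendsto g atTop (nhds (-((n/(n-1))/τ) * Sinf ^ p)) :=
      ((Real.continuousAt_rpow_const Sinf p (Or.inl hSinf_pos.ne')).tendsto.comp
        hSinf_lim).const_mul _
    have hnn : ∀ x ∈ Set.Ioi (0:ℝ), 0 ≤ h x := fun x _ => hh_nonneg x
    constructor
    · rw [hCdef, integral_Ioi_of_hasDerivAt_of_nonneg' (fun x _ => hderiv x) hnn htend]
      simp only [hg]
      ring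
    · exact integrableOn_Ioi_deriv_of_nonneg' (fun x _ => hderiv x) hnn htend
  have hC_nonneg : 0 ≤ C := setIntegral_nonneg measurableSet_Ioi fun t _ => hh_nonneg t
  -- the convolution-type inner integrals
  set Φ : ℝ → ℝ := fun c => ∫ a in Set.Ioc (0:ℝ) c, h (c - a) * E a with hΦdef
  set Ψ : ℝ → ℝ := fun u => ∫ c in Set.Ioc (0:ℝ) u, Real.exp (τ * c) * Φ c with hΨdef
  have hΦ_nonneg : ∀ c, 0 ≤ Φ c := fun c =>
    setIntegral_nonneg measurableSet_Ioc fun a ha =>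
      mul_nonneg (hh_nonneg _) (hE_nonneg a ha.1)
  have hΨ_nonneg : ∀ u, 0 ≤ Ψ u := fun u =>
    setIntegral_nonneg measurableSet_Ioc fun c _ =>
      mul_nonneg (Real.exp_pos _).le (hΦ_nonneg c)
  -- measurability of Φ
  have hΦ_sm : StronglyMeasurable Φ := by
    have hset : MeasurableSet {q : ℝ × ℝ | 0 < q.2 ∧ q.2 ≤ q.1} :=
      (measurableSet_lt measurable_const measurable_snd).inter
        (measurableSet_le measurable_snd measurable_fst)
    have hGm : Measurable ({q : ℝ × ℝ | 0 < q.2 ∧ q.2 ≤ q.1}.indicator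
        (fun q : ℝ × ℝ => h (q.1 - q.2) * E q.2)) :=
      Measurable.indicator
        ((hhcont.measurable.comp (measurable_fst.sub measurable_snd)).mul
          (hE_meas.comp measurable_snd)) hset
    have key : Φ = fun c => ∫ a, ({q : ℝ × ℝ | 0 < q.2 ∧ q.2 ≤ q.1}.indicator
        (fun q : ℝ × ℝ => h (q.1 - q.2) * E q.2)) (c, a) := by
      funext c
      rw [show Φ c = ∫ a in Set.Ioc (0:ℝ) c, h (c - a) * E a from rfl,
        ← MeasureTheory.integral_indicator measurableSet_Ioc]
      refine integral_congr_ae (Filter.Eventually.of_forall fun a => ?_)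
      by_cases hmem : 0 < a ∧ a ≤ c <;>
        simp [Set.indicator_apply, Set.mem_Ioc, Set.mem_setOf_eq, hmem]
    rw [key]
    exact hGm.stronglyMeasurable.integral_prod_right'
  have hΦ_meas : Measurable Φ := hΦ_sm.measurable
  -- rewrite the original integrand on (0,∞)
  have eq1 : ∀ u ∈ Set.Ioi (0:ℝ),
      (∫ c in (0:ℝ)..u, ∫ a in (0:ℝ)..c,
        τ * κ * S (c - a) ^ (-(1 : ℝ) / n) * σ (c - a) * f a
          * Real.exp (-τ * a) * Real.exp (τ * c) * Real.exp (-τ * u))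
      = τ * κ * (Real.exp (-τ * u) * Ψ u) := by
    intro u hu
    rw [intervalIntegral.integral_of_le (le_of_lt hu)]
    have step : ∀ c ∈ Set.Ioc (0:ℝ) u,
        (∫ a in (0:ℝ)..c,
          τ * κ * S (c - a) ^ (-(1 : ℝ) / n) * σ (c - a) * f a
            * Real.exp (-τ * a) * Real.exp (τ * c) * Real.exp (-τ * u))
        = (τ * κ * Real.exp (-τ * u)) * (Real.exp (τ * c) * Φ c) := by
      intro c hc
      have : (fun a => τ * κ * S (c - a) ^ (-(1 : ℝ) / n) * σ (c - a) * f a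
            * Real.exp (-τ * a) * Real.exp (τ * c) * Real.exp (-τ * u))
          = fun a => (τ * κ * Real.exp (τ * c) * Real.exp (-τ * u)) * (h (c - a) * E a) := by
        funext a
        simp only [hhdef, hEdef]
        ring
      rw [this, intervalIntegral.integral_const_mul,
        intervalIntegral.integral_of_le hc.1.le]
      rw [hΦdef]
      ring
    rw [MeasureTheory.setIntegral_congr_fun measurableSet_Ioc step,
      MeasureTheory.integral_const_mul]
    rw [show Ψ u = ∫ c in Set.Ioc (0:ℝ) u, Real.exp (τ * c) * Φ c from rfl]
    ring
  -- transformed integrability hypothesis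
  have hΨint : IntegrableOn (fun u => Real.exp (-τ * u) * Ψ u) (Set.Ioi (0:ℝ)) := by
    have h1 : IntegrableOn (fun u => τ * κ * (Real.exp (-τ * u) * Ψ u)) (Set.Ioi (0:ℝ)) :=
      hint.congr_fun eq1 measurableSet_Ioi
    have h2 := h1.const_mul ((τ * κ)⁻¹)
    rwa [show (fun u => (τ * κ)⁻¹ * (τ * κ * (Real.exp (-τ * u) * Ψ u)))
        = fun u => Real.exp (-τ * u) * Ψ u from funext fun u => by
      field_simp] at h2
  -- exponential integral over [c, ∞)
  have hexp : ∀ c : ℝ, (∫ u in Set.Ici c, Real.exp (-τ * u)) = Real.exp (-τ * c) / τ := by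
    intro c
    rw [MeasureTheory.integral_Ici_eq_integral_Ioi]
    have hderiv : ∀ u ∈ Set.Ioi c, HasDerivAt (fun u => Real.exp (-τ * u) * (-(1/τ)))
        (Real.exp (-τ * u)) u := by
      intro u _
      have d1 : HasDerivAt (fun u : ℝ => -τ * u) (-τ * 1) u := (hasDerivAt_id u).const_mul (-τ)
      have d2 := d1.exp.mul_const (-(1/τ))
      refine d2.congr_deriv ?_
      field_simp
    have htend : Tendsto (fun u => Real.exp (-τ * u) * (-(1/τ))) atTop (nhds 0) := by
      have h1 : Tendsto (fun u : ℝ => -τ * u) atTop atBot :=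
        Filter.Tendsto.const_mul_atTop_of_neg (neg_neg_iff_pos.2 hτ) tendsto_id
      have h2 := (Real.tendsto_exp_atBot.comp h1).mul_const (-(1/τ))
      simpa using h2
    have hcont : ContinuousWithinAt (fun u => Real.exp (-τ * u) * (-(1/τ))) (Set.Ici c) c :=
      (((Real.continuous_exp.comp (continuous_const.mul continuous_id)).mul
        continuous_const)).continuousWithinAt
    rw [integral_Ioi_of_hasDerivAt_of_tendsto hcont hderiv
      (exp_neg_integrableOn_Ioi c hτ) htend]
    field_simp
    ring
  have hsetT : MeasurableSet {q : ℝ × ℝ | 0 < q.2 ∧ q.2 ≤ q.1} :=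
    (measurableSet_lt measurable_const measurable_snd).inter
      (measurableSet_le measurable_snd measurable_fst)
  -- Fubini 1 : the (u,c) swap
  set W : ℝ → ℝ → ℝ := fun u c => (Set.Ioc (0:ℝ) u).indicator
      (fun c => Real.exp (-τ * u) * (Real.exp (τ * c) * Φ c)) c with hWdef
  have hW_meas : Measurable (Function.uncurry W) := by
    have huncurry : Function.uncurry W = {q : ℝ × ℝ | 0 < q.2 ∧ q.2 ≤ q.1}.indicator
        (fun q : ℝ × ℝ => Real.exp (-τ * q.1) * (Real.exp (τ * q.2) * Φ q.2)) := by
      funext q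
      obtain ⟨u, c⟩ := q
      by_cases hmem : 0 < c ∧ c ≤ u <;>
        simp [Function.uncurry, hWdef, Set.indicator_apply, Set.mem_Ioc,
          Set.mem_setOf_eq, hmem]
    rw [huncurry]
    exact Measurable.indicator
      ((Real.measurable_exp.comp (measurable_fst.const_mul (-τ))).mul
        ((Real.measurable_exp.comp (measurable_snd.const_mul τ)).mul
          (hΦ_meas.comp measurable_snd))) hsetT
  have hW_nonneg : ∀ u c, 0 ≤ W u c := by
    intro u c
    apply Set.indicator_nonneg
    intro x hx
    exact mul_nonneg (Real.exp_pos _).le (mul_nonneg (Real.exp_pos _).le (hΦ_nonneg x))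
  have rowW : ∀ u ∈ Set.Ioi (0:ℝ),
      (∫ c in Set.Ioi (0:ℝ), W u c) = Real.exp (-τ * u) * Ψ u := by
    intro u hu
    rw [show (fun c => W u c) = (Set.Ioc (0:ℝ) u).indicator
        (fun c => Real.exp (-τ * u) * (Real.exp (τ * c) * Φ c)) from rfl]
    rw [MeasureTheory.setIntegral_indicator measurableSet_Ioc,
      Set.inter_eq_self_of_subset_right Set.Ioc_subset_Ioi_self,
      MeasureTheory.integral_const_mul]
  have sliceW : ∀ u ∈ Set.Ioi (0:ℝ),
      Integrable (fun c => W u c) (volume.restrict (Set.Ioi (0:ℝ))) := by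
    intro u hu
    obtain ⟨M, hM⟩ := (isCompact_Icc (a := (0:ℝ)) (b := u)).exists_bound_of_continuousOn
      hhcont.continuousOn
    have hM0 : 0 ≤ M := (norm_nonneg (h 0)).trans (hM 0 ⟨le_refl _, le_of_lt hu⟩)
    have hA_nonneg : 0 ≤ A := setIntegral_nonneg measurableSet_Ioi fun a ha =>
      hE_nonneg a ha
    have hΦbd : ∀ c ∈ Set.Ioc (0:ℝ) u, ‖Φ c‖ ≤ M * A := by
      intro c hc
      have hb : ‖Φ c‖ ≤ ∫ a in Set.Ioc (0:ℝ) c, M * E a := by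
        apply MeasureTheory.norm_integral_le_of_norm_le
          ((hf_lap.mono_set Set.Ioc_subset_Ioi_self).const_mul M)
        filter_upwards [ae_restrict_mem measurableSet_Ioc] with a ha
        have h1 : c - a ∈ Set.Icc (0:ℝ) u := ⟨by linarith [ha.2], by linarith [ha.1, hc.2]⟩
        have h2 : h (c - a) ≤ M := (le_abs_self _).trans (hM _ h1)
        rw [norm_mul, Real.norm_of_nonneg (hh_nonneg _), Real.norm_of_nonneg (hE_nonneg a ha.1)]
        exact mul_le_mul_of_nonneg_right h2 (hE_nonneg a ha.1)
      have hb2 : (∫ a in Set.Ioc (0:ℝ) c, M * E a) ≤ M * A := by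
        rw [MeasureTheory.integral_const_mul]
        apply mul_le_mul_of_nonneg_left _ hM0
        apply MeasureTheory.setIntegral_mono_set hf_lap
        · filter_upwards [ae_restrict_mem measurableSet_Ioi] with a ha
          exact hE_nonneg a ha
        · exact (Set.Ioc_subset_Ioi_self).eventuallyLE
      exact hb.trans hb2
    have g_int : IntegrableOn (fun c => Real.exp (-τ * u) * (Real.exp (τ * c) * Φ c))
        (Set.Ioc (0:ℝ) u) := by
      apply Integrable.mono' (g := fun _ => Real.exp (-τ * u) * (Real.exp (τ * u) * (M * A)))
        (integrableOn_const measure_Ioc_lt_top.ne)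
      · exact (((Real.measurable_exp.comp (measurable_id.const_mul τ)).mul
          hΦ_meas).const_mul _).aestronglyMeasurable
      · filter_upwards [ae_restrict_mem measurableSet_Ioc] with c hc
        rw [norm_mul, norm_mul, Real.norm_of_nonneg (Real.exp_pos _).le,
          Real.norm_of_nonneg (Real.exp_pos _).le]
        have h1 : Real.exp (τ * c) ≤ Real.exp (τ * u) :=
          Real.exp_le_exp.2 (by nlinarith [hc.2, hτ])
        have h2 : ‖Φ c‖ ≤ M * A := hΦbd c hc
        have h3 : Real.exp (τ * c) * ‖Φ c‖ ≤ Real.exp (τ * u) * (M * A) :=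
          mul_le_mul h1 h2 (norm_nonneg _) (Real.exp_pos _).le
        exact mul_le_mul_of_nonneg_left h3 (Real.exp_pos _).le
    exact ((integrable_indicator_iff measurableSet_Ioc).2 g_int).restrict
  have hnormW : Integrable (fun u => ∫ c, ‖W u c‖ ∂(volume.restrict (Set.Ioi (0:ℝ))))
      (volume.restrict (Set.Ioi (0:ℝ))) := by
    apply hΨint.congr
    filter_upwards [ae_restrict_mem measurableSet_Ioi] with u hu
    rw [show (∫ c, ‖W u c‖ ∂(volume.restrict (Set.Ioi (0:ℝ))))
        = ∫ c in Set.Ioi (0:ℝ), W u c from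
      MeasureTheory.integral_congr_ae (Filter.Eventually.of_forall fun c =>
        Real.norm_of_nonneg (hW_nonneg u c)), rowW u hu]
  have hW_int : Integrable (Function.uncurry W)
      ((volume.restrict (Set.Ioi (0:ℝ))).prod (volume.restrict (Set.Ioi (0:ℝ)))) := by
    refine (MeasureTheory.integrable_prod_iff hW_meas.aestronglyMeasurable).2 ⟨?_, hnormW⟩
    filter_upwards [ae_restrict_mem measurableSet_Ioi] with u hu
    exact sliceW u hu
  have colW : ∀ c ∈ Set.Ioi (0:ℝ), (∫ u in Set.Ioi (0:ℝ), W u c) = Φ c / τ := by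
    intro c hc
    have hrw : (fun u => W u c) = (Set.Ici c).indicator
        (fun u => Real.exp (-τ * u) * (Real.exp (τ * c) * Φ c)) := by
      funext u
      simp only [hWdef]
      by_cases hcu : c ≤ u
      · rw [Set.indicator_of_mem (Set.mem_Ioc.2 ⟨hc, hcu⟩),
          Set.indicator_of_mem (Set.mem_Ici.2 hcu)]
      · rw [Set.indicator_of_notMem (fun hmem => hcu (Set.mem_Ioc.1 hmem).2),
          Set.indicator_of_notMem (fun hmem => hcu (Set.mem_Ici.1 hmem))]
    rw [hrw, MeasureTheory.setIntegral_indicator measurableSet_Ici,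
      Set.inter_eq_self_of_subset_right
        (show Set.Ici c ⊆ Set.Ioi (0:ℝ) from fun x hx => Set.mem_Ioi.2 (lt_of_lt_of_le hc (Set.mem_Ici.1 hx))),
      MeasureTheory.integral_mul_const, hexp c]
    have h1 : Real.exp (-τ * c) * Real.exp (τ * c) = 1 := by
      rw [← Real.exp_add, show -τ * c + τ * c = 0 by ring, Real.exp_zero]
    calc Real.exp (-τ * c) / τ * (Real.exp (τ * c) * Φ c)
        = (Real.exp (-τ * c) * Real.exp (τ * c)) * Φ c / τ := by ring
      _ = Φ c / τ := by rw [h1, one_mul]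
  have swap1 : (∫ u in Set.Ioi (0:ℝ), Real.exp (-τ * u) * Ψ u)
      = (∫ c in Set.Ioi (0:ℝ), Φ c) / τ := by
    calc (∫ u in Set.Ioi (0:ℝ), Real.exp (-τ * u) * Ψ u)
        = ∫ u in Set.Ioi (0:ℝ), ∫ c in Set.Ioi (0:ℝ), W u c :=
          (MeasureTheory.setIntegral_congr_fun measurableSet_Ioi
            (fun u hu => (rowW u hu).symm))
      _ = ∫ c in Set.Ioi (0:ℝ), ∫ u in Set.Ioi (0:ℝ), W u c :=
          MeasureTheory.integral_integral_swap hW_int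
      _ = ∫ c in Set.Ioi (0:ℝ), Φ c / τ :=
          MeasureTheory.setIntegral_congr_fun measurableSet_Ioi colW
      _ = (∫ c in Set.Ioi (0:ℝ), Φ c) / τ := MeasureTheory.integral_div τ _
  -- Fubini 2 : the (c,a) swap
  set V : ℝ → ℝ → ℝ := fun c a => (Set.Ioc (0:ℝ) c).indicator
      (fun a => h (c - a) * E a) a with hVdef
  have hV_meas : Measurable (Function.uncurry V) := by
    have huncurry : Function.uncurry V = {q : ℝ × ℝ | 0 < q.2 ∧ q.2 ≤ q.1}.indicator
        (fun q : ℝ × ℝ => h (q.1 - q.2) * E q.2) := by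
      funext q
      obtain ⟨c, a⟩ := q
      by_cases hmem : 0 < a ∧ a ≤ c <;>
        simp [Function.uncurry, hVdef, Set.indicator_apply, Set.mem_Ioc,
          Set.mem_setOf_eq, hmem]
    rw [huncurry]
    exact Measurable.indicator
      ((hhcont.measurable.comp (measurable_fst.sub measurable_snd)).mul
        (hE_meas.comp measurable_snd)) hsetT
  have hV_nonneg : ∀ c a, 0 ≤ V c a := by
    intro c a
    apply Set.indicator_nonneg
    intro x hx
    exact mul_nonneg (hh_nonneg _) (hE_nonneg x hx.1)
  have htransl : ∀ a : ℝ, (∫ c in Set.Ici a, h (c - a)) = C := by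
    intro a
    rw [← MeasureTheory.integral_indicator measurableSet_Ici]
    have hptw : ((Set.Ici a).indicator (fun c => h (c - a)))
        = fun c => (Set.Ici (0:ℝ)).indicator h (c - a) := by
      funext c
      by_cases hca : a ≤ c
      · rw [Set.indicator_of_mem (Set.mem_Ici.2 hca),
          Set.indicator_of_mem (Set.mem_Ici.2 (by linarith))]
      · rw [Set.indicator_of_notMem (fun hm => hca (Set.mem_Ici.1 hm)),
          Set.indicator_of_notMem (fun hm => hca (by
            have := Set.mem_Ici.1 hm; linarith))]
    rw [hptw, MeasureTheory.integral_sub_right_eq_self ((Set.Ici (0:ℝ)).indicator h) a,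
      MeasureTheory.integral_indicator measurableSet_Ici,
      MeasureTheory.integral_Ici_eq_integral_Ioi]
  have hrowV : ∀ a : ℝ, 0 < a → (fun c => V c a) = (Set.Ici a).indicator
      (fun c => h (c - a) * E a) := by
    intro a ha
    funext c
    simp only [hVdef]
    by_cases hac : a ≤ c
    · rw [Set.indicator_of_mem (Set.mem_Ioc.2 ⟨ha, hac⟩),
        Set.indicator_of_mem (Set.mem_Ici.2 hac)]
    · rw [Set.indicator_of_notMem (fun hm => hac (Set.mem_Ioc.1 hm).2),
        Set.indicator_of_notMem (fun hm => hac (Set.mem_Ici.1 hm))]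
  have hha_int : ∀ a : ℝ, IntegrableOn (fun c => h (c - a)) (Set.Ici a) := by
    intro a
    rw [integrableOn_Ici_iff_integrableOn_Ioi]
    have h1 : Integrable ((Set.Ioi (0:ℝ)).indicator h) volume :=
      (integrable_indicator_iff measurableSet_Ioi).2 hFTC.2
    have h2 := h1.comp_sub_right a
    apply (integrable_indicator_iff measurableSet_Ioi).1
    have hptw : ((Set.Ioi a).indicator (fun c => h (c - a)))
        = fun c => (Set.Ioi (0:ℝ)).indicator h (c - a) := by
      funext c
      by_cases hca : a < c
      · rw [Set.indicator_of_mem (Set.mem_Ioi.2 hca),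
          Set.indicator_of_mem (Set.mem_Ioi.2 (by linarith))]
      · rw [Set.indicator_of_notMem (fun hm => hca (Set.mem_Ioi.1 hm)),
          Set.indicator_of_notMem (fun hm => hca (by
            have := Set.mem_Ioi.1 hm; linarith))]
    rw [hptw]
    exact h2
  have colV : ∀ a ∈ Set.Ioi (0:ℝ), (∫ c in Set.Ioi (0:ℝ), V c a) = C * E a := by
    intro a ha
    rw [hrowV a ha, MeasureTheory.setIntegral_indicator measurableSet_Ici,
      Set.inter_eq_self_of_subset_right
        (show Set.Ici a ⊆ Set.Ioi (0:ℝ) from fun x hx => Set.mem_Ioi.2 (lt_of_lt_of_le ha (Set.mem_Ici.1 hx))),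
      MeasureTheory.integral_mul_const, htransl a, mul_comm]
  have rowV' : ∀ c : ℝ, (∫ a in Set.Ioi (0:ℝ), V c a) = Φ c := by
    intro c
    rw [show (fun a => V c a) = (Set.Ioc (0:ℝ) c).indicator
        (fun a => h (c - a) * E a) from rfl,
      MeasureTheory.setIntegral_indicator measurableSet_Ioc,
      Set.inter_eq_self_of_subset_right Set.Ioc_subset_Ioi_self]
  have hV_int : Integrable (Function.uncurry V)
      ((volume.restrict (Set.Ioi (0:ℝ))).prod (volume.restrict (Set.Ioi (0:ℝ)))) := by
    refine (MeasureTheory.integrable_prod_iff' hV_meas.aestronglyMeasurable).2 ⟨?_, ?_⟩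
    · filter_upwards [ae_restrict_mem measurableSet_Ioi] with a ha
      simp only [Function.uncurry_apply_pair]
      rw [hrowV a ha]
      exact ((integrable_indicator_iff measurableSet_Ici).2 ((hha_int a).mul_const (E a))).restrict
    · apply (hf_lap.const_mul C).congr
      filter_upwards [ae_restrict_mem measurableSet_Ioi] with a ha
      simp only [Function.uncurry_apply_pair]
      rw [show (fun c => ‖V c a‖) = fun c => V c a from
        funext fun c => Real.norm_of_nonneg (hV_nonneg c a)]
      exact (colV a ha).symm
  have swap2 : (∫ c in Set.Ioi (0:ℝ), Φ c) = C * A := by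
    calc (∫ c in Set.Ioi (0:ℝ), Φ c)
        = ∫ c in Set.Ioi (0:ℝ), ∫ a in Set.Ioi (0:ℝ), V c a :=
          (MeasureTheory.setIntegral_congr_fun measurableSet_Ioi
            fun c _ => (rowV' c).symm)
      _ = ∫ a in Set.Ioi (0:ℝ), ∫ c in Set.Ioi (0:ℝ), V c a :=
          MeasureTheory.integral_integral_swap hV_int
      _ = ∫ a in Set.Ioi (0:ℝ), C * E a :=
          MeasureTheory.setIntegral_congr_fun measurableSet_Ioi colV
      _ = C * A := by rw [MeasureTheory.integral_const_mul]
  -- final assembly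
  rw [MeasureTheory.setIntegral_congr_fun measurableSet_Ioi eq1,
    MeasureTheory.integral_const_mul, swap1, swap2, hFTC.1]
  field_simp
  ring
end

section
/- Let f, g : ℝ → ℝ be continuous and φ : ℝ → ℝ be differentiable, and for t > a ≥ 0 define x(t,a) = φ(t−a)·exp(−∫_{t−a}^{t} f(s) ds)·exp(−∫₀^{a} g(b) db). Then for every t > a ≥ 0 the map h ↦ x(t+h, a+h) is differentiable at h = 0 with derivative −(f(t) + g(a))·x(t,a); moreover x(t,0) = φ(t) for all t > 0. -/
open Real MeasureTheory intervalIntegral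

/-- Verification of the solution along characteristic lines of the first-order
linear PDE `(∂ₜ + ∂ₐ)x(t,a) = −f(t)x(t,a) − g(a)x(t,a)` with boundary condition
`x(t,0) = φ(t)`: for `t > a ≥ 0`, the directional derivative of `x` along the
characteristic direction equals `−(f(t)+g(a))·x(t,a)`. -/
theorem characteristics_solution
    (f g : ℝ → ℝ) (hf : Continuous f) (hg : Continuous g)
    (φ : ℝ → ℝ) (hφ : Differentiable ℝ φ)
    (x : ℝ → ℝ → ℝ)
    (hx : ∀ t a : ℝ, x t a =
      φ (t - a) * Real.exp (-∫ s in (t - a)..t, f s) * Real.exp (-∫ b in (0:ℝ)..a, g b)) :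
    (∀ t a : ℝ, 0 ≤ a → a < t →
      HasDerivAt (fun h : ℝ => x (t + h) (a + h)) (-(f t + g a) * x t a) 0) ∧
    (∀ t : ℝ, 0 < t → x t 0 = φ t) := by
  constructor
  · intro t a _ _
    set c := t - a with hc
    -- derivative of upper-limit integrals
    have huf : HasDerivAt (fun b => ∫ s in c..b, f s) (f t) t :=
      intervalIntegral.integral_hasDerivAt_right (hf.intervalIntegrable c t)
        (hf.stronglyMeasurableAtFilter _ _) hf.continuousAt
    have hug : HasDerivAt (fun b => ∫ s in (0:ℝ)..b, g s) (g a) a :=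
      intervalIntegral.integral_hasDerivAt_right (hg.intervalIntegrable 0 a)
        (hg.stronglyMeasurableAtFilter _ _) hg.continuousAt
    have hadd_t : HasDerivAt (fun h : ℝ => t + h) 1 0 := by
      simpa using (hasDerivAt_id (0:ℝ)).const_add t
    have hadd_a : HasDerivAt (fun h : ℝ => a + h) 1 0 := by
      simpa using (hasDerivAt_id (0:ℝ)).const_add a
    have h1 : HasDerivAt (fun h : ℝ => ∫ s in c..(t + h), f s) (f t) 0 := by
      have huf' : HasDerivAt (fun b => ∫ s in c..b, f s) (f t) (t + 0) := by simpa using huf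
      exact (huf'.comp 0 hadd_t).congr_deriv (mul_one _)
    have h2 : HasDerivAt (fun h : ℝ => ∫ s in (0:ℝ)..(a + h), g s) (g a) 0 := by
      have hug' : HasDerivAt (fun b => ∫ s in (0:ℝ)..b, g s) (g a) (a + 0) := by simpa using hug
      exact (hug'.comp 0 hadd_a).congr_deriv (mul_one _)
    have e1 : HasDerivAt (fun h : ℝ => Real.exp (-∫ s in c..(t + h), f s))
        (Real.exp (-∫ s in c..t, f s) * (-f t)) 0 := by
      simpa using (h1.neg).exp
    have e2 : HasDerivAt (fun h : ℝ => Real.exp (-∫ s in (0:ℝ)..(a + h), g s))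
        (Real.exp (-∫ s in (0:ℝ)..a, g s) * (-g a)) 0 := by
      simpa using (h2.neg).exp
    have hmul := ((e1.const_mul (φ c)).mul e2)
    have key : HasDerivAt
        (fun h : ℝ => φ c * Real.exp (-∫ s in c..(t + h), f s) *
          Real.exp (-∫ s in (0:ℝ)..(a + h), g s))
        (-(f t + g a) * x t a) 0 := by
      refine hmul.congr_deriv ?_
      rw [hx t a, ← hc]
      simp only [add_zero]
      ring
    have hfun : (fun h : ℝ => x (t + h) (a + h)) =
        (fun h : ℝ => φ c * Real.exp (-∫ s in c..(t + h), f s) *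
          Real.exp (-∫ s in (0:ℝ)..(a + h), g s)) := by
      funext h
      rw [hx]
      have : t + h - (a + h) = c := by rw [hc]; ring
      rw [this]
    rw [hfun]
    exact key
  · intro t _
    rw [hx]
    simp
end

section
/- Let τ > 0, let f : [0,∞) → [0,∞) be continuous and bounded with ∫₀^∞ f = 1, set ξ(a) = ∫ₐ^∞ f(q) dq and assume ξ(a) > 0 for all a ≥ 0. Let σ : [0,∞) → ℝ be continuous and let φ : [0,∞) → [0,∞) be continuous with ∫₀^∞ φ(b)/ξ(b) db < ∞. Define I(t) = ∫₀ᵗ τ·σ(t−a)·ξ(a) da + ∫ₜ^∞ φ(a−t)·ξ(a)/ξ(a−t) da. Then I is differentiable on (0,∞) and I'(t) = τ·σ(t) − ∫₀ᵗ τ·σ(t−a)·f(a) da − ∫ₜ^∞ φ(a−t)·f(a)/ξ(a−t) da for all t > 0. -/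
open Real MeasureTheory intervalIntegral Topology

private lemma integral_Ioi_shift (H : ℝ → ℝ) (t : ℝ) :
    ∫ a in Set.Ioi t, H a = ∫ b in Set.Ioi (0:ℝ), H (b + t) := by
  rw [← MeasureTheory.integral_indicator measurableSet_Ioi, ← MeasureTheory.integral_indicator measurableSet_Ioi,
    ← integral_add_right_eq_self (fun a => (Set.Ioi t).indicator H a) t]
  congr 1
  funext b
  by_cases hb : (0:ℝ) < b
  · rw [Set.indicator_of_mem (by simp [hb] : b + t ∈ Set.Ioi t),
      Set.indicator_of_mem (Set.mem_Ioi.mpr hb)]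
  · rw [Set.indicator_of_notMem (by simp [hb] : b + t ∉ Set.Ioi t),
      Set.indicator_of_notMem (by simpa using hb)]

set_option maxHeartbeats 2000000 in
set_option maxHeartbeats 400000 in
private lemma tail_deriv (f ξ φ : ℝ → ℝ) (M : ℝ) (hM0 : 0 ≤ M)
    (hfM : ∀ a : ℝ, 0 ≤ a → f a ≤ M)
    (hf_cont : ContinuousOn f (Set.Ici 0))
    (hf_nonneg : ∀ a ≥ (0:ℝ), 0 ≤ f a)
    (hξ_pos : ∀ a ≥ (0:ℝ), 0 < ξ a)
    (hξ_le_one : ∀ x : ℝ, 0 ≤ x → ξ x ≤ 1)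
    (hξd : ∀ x : ℝ, 0 < x → HasDerivAt ξ (-f x) x)
    (hξc : ContinuousOn ξ (Set.Ioi 0))
    (hφ_cont : ContinuousOn φ (Set.Ici 0))
    (hφ_nonneg : ∀ b ≥ (0:ℝ), 0 ≤ φ b)
    (hφ_int : IntegrableOn (fun b => φ b / ξ b) (Set.Ioi 0))
    (t : ℝ) (ht : 0 < t) :
    HasDerivAt (fun s => ∫ b in Set.Ioi (0:ℝ), φ b / ξ b * ξ (b + s))
      (∫ b in Set.Ioi (0:ℝ), -(φ b / ξ b * f (b + t))) t := by
  have hφξ_cont : ContinuousOn (fun b => φ b / ξ b) (Set.Ioi 0) :=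
    (hφ_cont.mono Set.Ioi_subset_Ici_self).div hξc
      (fun b hb => (hξ_pos b (le_of_lt hb)).ne')
  have hGmeas : ∀ s : ℝ, 0 < s → AEStronglyMeasurable (fun b => φ b / ξ b * ξ (b + s))
      (volume.restrict (Set.Ioi (0:ℝ))) := by
    intro s hs
    apply ContinuousOn.aestronglyMeasurable _ measurableSet_Ioi
    exact hφξ_cont.mul (hξc.comp ((continuous_id.add continuous_const).continuousOn)
      (fun b hb => Set.mem_Ioi.mpr (add_pos (Set.mem_Ioi.mp hb) hs)))
  have hG'meas : AEStronglyMeasurable (fun b => -(φ b / ξ b * f (b + t)))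
      (volume.restrict (Set.Ioi (0:ℝ))) := by
    apply ContinuousOn.aestronglyMeasurable _ measurableSet_Ioi
    exact (hφξ_cont.mul ((hf_cont.mono Set.Ioi_subset_Ici_self).comp
      ((continuous_id.add continuous_const).continuousOn)
      (fun b hb => Set.mem_Ioi.mpr (add_pos (Set.mem_Ioi.mp hb) ht)))).neg
  have hGint : Integrable (fun b => φ b / ξ b * ξ (b + t))
      (volume.restrict (Set.Ioi (0:ℝ))) := by
    refine Integrable.mono' hφ_int (hGmeas t ht) ?_
    refine (ae_restrict_iff' measurableSet_Ioi).mpr (Filter.Eventually.of_forall fun b hb => ?_)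
    have hb0 : (0:ℝ) < b := hb
    have h1 : 0 ≤ φ b / ξ b := div_nonneg (hφ_nonneg b hb0.le) (hξ_pos b hb0.le).le
    have h2 : 0 ≤ ξ (b + t) := (hξ_pos (b + t) (by positivity)).le
    have h3 : ξ (b + t) ≤ 1 := hξ_le_one (b + t) (by positivity)
    rw [Real.norm_eq_abs, abs_of_nonneg (mul_nonneg h1 h2)]
    exact mul_le_of_le_one_right h1 h3
  have hbound : ∀ᵐ b ∂(volume.restrict (Set.Ioi (0:ℝ))),
      ∀ s ∈ Metric.ball t t, ‖-(φ b / ξ b * f (b + s))‖ ≤ M * (φ b / ξ b) := by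
    refine (ae_restrict_iff' measurableSet_Ioi).mpr
      (Filter.Eventually.of_forall fun b hb s hs => ?_)
    have hb0 : (0:ℝ) < b := hb
    have hs0 : (0:ℝ) < s := by
      rw [Metric.mem_ball, Real.dist_eq, abs_lt] at hs
      linarith [hs.1]
    have h1 : 0 ≤ φ b / ξ b := div_nonneg (hφ_nonneg b hb0.le) (hξ_pos b hb0.le).le
    have h2 : 0 ≤ f (b + s) := hf_nonneg (b + s) (by positivity)
    rw [norm_neg, Real.norm_eq_abs, abs_of_nonneg (mul_nonneg h1 h2), mul_comm M]
    exact mul_le_mul_of_nonneg_left (hfM (b + s) (by positivity)) h1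
  have hdiff : ∀ᵐ b ∂(volume.restrict (Set.Ioi (0:ℝ))),
      ∀ s ∈ Metric.ball t t,
        HasDerivAt (fun s => φ b / ξ b * ξ (b + s)) (-(φ b / ξ b * f (b + s))) s := by
    refine (ae_restrict_iff' measurableSet_Ioi).mpr
      (Filter.Eventually.of_forall fun b hb s hs => ?_)
    have hb0 : (0:ℝ) < b := hb
    have hs0 : (0:ℝ) < s := by
      rw [Metric.mem_ball, Real.dist_eq, abs_lt] at hs
      linarith [hs.1]
    have hcomp : HasDerivAt (fun s => ξ (b + s)) (-f (b + s)) s := by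
      have h := (hξd (b + s) (by positivity)).comp s ((hasDerivAt_id s).const_add b)
      rw [mul_one] at h; exact h
    have h2 := hcomp.const_mul (φ b / ξ b)
    simpa [mul_neg] using h2
  have key := _root_.hasDerivAt_integral_of_dominated_loc_of_deriv_le
    (F := fun s b => φ b / ξ b * ξ (b + s))
    (F' := fun s b => -(φ b / ξ b * f (b + s))) (Metric.ball_mem_nhds t ht)
    (Filter.eventually_of_mem (Ioi_mem_nhds ht) (fun s hs => hGmeas s hs))
    hGint hG'meas hbound (hφ_int.const_mul M) hdiff
  exact key.2

set_option maxHeartbeats 1000000 in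
private lemma conv_deriv (f g ξ F : ℝ → ℝ) (M : ℝ) (hM0 : 0 ≤ M)
    (hfM : ∀ a : ℝ, 0 ≤ a → f a ≤ M)
    (hf_cont : ContinuousOn f (Set.Ici 0))
    (hf_nonneg : ∀ a ≥ (0:ℝ), 0 ≤ f a)
    (hf_int : IntegrableOn f (Set.Ioi 0))
    (hg_cont : ContinuousOn g (Set.Ici 0))
    (hFdef : ∀ u : ℝ, F u = ∫ s in (0:ℝ)..u, f s)
    (hξF : ∀ x : ℝ, 0 ≤ x → ξ x = 1 - F x)
    (t : ℝ) (ht : 0 < t) :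
    HasDerivAt (fun u => ∫ a in (0:ℝ)..u, g (u - a) * ξ a)
      (g t - ∫ a in (0:ℝ)..t, g a * f (t - a)) t := by
  obtain ⟨Cg₀, hCg₀⟩ := (isCompact_Icc (a := (0:ℝ)) (b := t+1)).exists_bound_of_continuousOn
      (hg_cont.mono (fun z hz => hz.1))
  set Cg : ℝ := max Cg₀ 0 with hCgdef
  have hCg0 : (0:ℝ) ≤ Cg := le_max_right _ _
  have hCg : ∀ a ∈ Set.Icc (0:ℝ) (t+1), ‖g a‖ ≤ Cg := fun a ha =>
    (hCg₀ a ha).trans (le_max_left _ _)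
  set K : ℝ → ℝ → ℝ := fun s a => (Set.Ioo 0 s).indicator (fun a => g a * f (s - a)) a with hKdef
  set C : ℝ → ℝ := fun s => ∫ a in (0:ℝ)..s, g a * f (s - a) with hCdef
  have hKmeas : ∀ s : ℝ, AEStronglyMeasurable (K s) volume := by
    intro s
    simp only [hKdef]
    rw [aestronglyMeasurable_indicator_iff measurableSet_Ioo]
    apply ContinuousOn.aestronglyMeasurable _ measurableSet_Ioo
    exact (hg_cont.mono (fun z hz => le_of_lt hz.1)).mul
      ((hf_cont.mono Set.Ioi_subset_Ici_self).comp
        ((continuous_const.sub continuous_id).continuousOn)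
        (fun a ha => Set.mem_Ioi.mpr (sub_pos.mpr ha.2)))
  have hCK : ∀ s : ℝ, 0 < s → C s = ∫ a, K s a := by
    intro s hs
    simp only [hCdef, hKdef]
    rw [intervalIntegral.integral_of_le hs.le, integral_Ioc_eq_integral_Ioo,
      ← MeasureTheory.integral_indicator measurableSet_Ioo]
  have hCcont : ∀ x ∈ Set.Ioo (0:ℝ) (t+1), ContinuousAt C x := by
    intro x hx
    have hmain : ContinuousAt (fun s => ∫ a, K s a) x := by
      apply continuousAt_of_dominated (bound := (Set.Ioc (0:ℝ) (t+1)).indicator fun _ => Cg * M)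
        (Filter.Eventually.of_forall hKmeas)
      · refine Filter.eventually_of_mem (Ioo_mem_nhds hx.1 hx.2) fun s hs =>
          Filter.Eventually.of_forall fun a => ?_
        by_cases ha : a ∈ Set.Ioo 0 s
        · simp only [hKdef]
          rw [Set.indicator_of_mem ha]
          have haI : a ∈ Set.Icc (0:ℝ) (t+1) := ⟨ha.1.le, ha.2.le.trans hs.2.le⟩
          have h2 : ‖f (s - a)‖ ≤ M := by
            rw [Real.norm_eq_abs, abs_of_nonneg (hf_nonneg _ (sub_pos.mpr ha.2).le)]
            exact hfM _ (sub_pos.mpr ha.2).le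
          have hbnd : a ∈ Set.Ioc (0:ℝ) (t+1) := ⟨ha.1, ha.2.le.trans hs.2.le⟩
          rw [Set.indicator_of_mem hbnd]
          calc ‖g a * f (s - a)‖ = ‖g a‖ * ‖f (s - a)‖ := norm_mul _ _
            _ ≤ Cg * M := mul_le_mul (hCg a haI) h2 (norm_nonneg _) hCg0
        · simp only [hKdef]
          rw [Set.indicator_of_notMem ha]
          simp only [norm_zero]
          exact Set.indicator_nonneg (fun _ _ => by positivity) a
      · exact (integrable_indicator_iff measurableSet_Ioc).mpr
          (integrableOn_const measure_Ioc_lt_top.ne)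
      · have hae : ∀ᵐ a : ℝ, a ∉ ({0, x} : Set ℝ) :=
          compl_mem_ae_iff.mpr (((Set.finite_singleton x).insert 0).measure_zero _)
        refine hae.mono fun a ha => ?_
        simp only [Set.mem_insert_iff, Set.mem_singleton_iff, not_or] at ha
        obtain ⟨ha0, hax⟩ := ha
        by_cases hmem : a ∈ Set.Ioo 0 x
        · have hev : (fun s => g a * f (s - a)) =ᶠ[𝓝 x] fun s => K s a := by
            refine Filter.eventually_of_mem (Ioi_mem_nhds hmem.2) fun s hs => ?_
            simp only [hKdef]
            rw [Set.indicator_of_mem (Set.mem_Ioo.mpr ⟨hmem.1, hs⟩)]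
          refine ContinuousAt.congr ?_ hev
          have h5 : ContinuousAt (fun s : ℝ => s - a) x :=
            (continuous_id.sub continuous_const).continuousAt
          have h6 : ContinuousAt f (x - a) :=
            hf_cont.continuousAt (Ici_mem_nhds (sub_pos.mpr hmem.2))
          exact (ContinuousAt.comp (x := x) h6 h5).const_mul (g a)
        · have hcase : a < 0 ∨ x < a := by
            rcases lt_trichotomy a 0 with h | h | h
            · exact Or.inl h
            · exact absurd h ha0
            · right
              rcases lt_trichotomy a x with h2 | h2 | h2
              · exact absurd ⟨h, h2⟩ hmem
              · exact absurd h2 hax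
              · exact h2
          rcases hcase with h | h
          · have hev : (fun _ : ℝ => (0:ℝ)) =ᶠ[𝓝 x] fun s => K s a :=
              Filter.Eventually.of_forall fun s => by
                simp only [hKdef]
                rw [Set.indicator_of_notMem (fun hc => absurd hc.1 (by linarith))]
            exact continuousAt_const.congr hev
          · have hev : (fun _ : ℝ => (0:ℝ)) =ᶠ[𝓝 x] fun s => K s a := by
              refine Filter.eventually_of_mem (Iio_mem_nhds h) fun s hs => ?_
              simp only [hKdef]
              rw [Set.indicator_of_notMem
                (fun hc => absurd hc.2 (by simp only [Set.mem_Iio] at hs; linarith))]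
            exact continuousAt_const.congr hev
    exact hmain.congr (Filter.eventually_of_mem (Ioi_mem_nhds hx.1) fun s hs => (hCK s hs).symm)
  have hginti : ∀ u : ℝ, 0 ≤ u → IntervalIntegrable g volume 0 u := by
    intro u hu
    apply ContinuousOn.intervalIntegrable
    rw [Set.uIcc_of_le hu]
    exact hg_cont.mono fun z hz => hz.1
  have hCbdd : ∀ u ∈ Set.Ioo (0:ℝ) (t+1), ∀ s ∈ Set.Ioc (0:ℝ) u, ‖C s‖ ≤ Cg * M * (t+1) := by
    intro u hu s hs
    have h1 : ∀ a ∈ Set.uIoc (0:ℝ) s, ‖g a * f (s - a)‖ ≤ Cg * M := by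
      intro a ha
      rw [Set.uIoc_of_le hs.1.le] at ha
      have haI : a ∈ Set.Icc (0:ℝ) (t+1) := ⟨ha.1.le, ha.2.trans (hs.2.trans hu.2.le)⟩
      have hsa : 0 ≤ s - a := sub_nonneg.mpr ha.2
      have h2 : ‖f (s - a)‖ ≤ M := by
        rw [Real.norm_eq_abs, abs_of_nonneg (hf_nonneg _ hsa)]; exact hfM _ hsa
      calc ‖g a * f (s - a)‖ = ‖g a‖ * ‖f (s - a)‖ := norm_mul _ _
        _ ≤ Cg * M := mul_le_mul (hCg a haI) h2 (norm_nonneg _) hCg0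
    have h2 := intervalIntegral.norm_integral_le_of_norm_le_const h1
    simp only [hCdef]
    refine h2.trans ?_
    rw [sub_zero, abs_of_pos hs.1]
    nlinarith [mul_nonneg hCg0 hM0, hs.2.trans hu.2.le, hs.1]
  have hCinti : ∀ u ∈ Set.Ioo (0:ℝ) (t+1), IntervalIntegrable C volume 0 u := by
    intro u hu
    rw [intervalIntegrable_iff, Set.uIoc_of_le hu.1.le]
    refine Integrable.mono' (g := fun _ => Cg * M * (t+1))
      (integrableOn_const measure_Ioc_lt_top.ne)
      (ContinuousOn.aestronglyMeasurable
        (fun s hs => (hCcont s ⟨hs.1, lt_of_le_of_lt hs.2 hu.2⟩).continuousWithinAt)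
        measurableSet_Ioc)
      ((ae_restrict_iff' measurableSet_Ioc).mpr (Filter.Eventually.of_forall fun s hs =>
        hCbdd u hu s hs))
  have hfub : ∀ u ∈ Set.Ioo (0:ℝ) (t+1),
      (∫ s in (0:ℝ)..u, C s) = ∫ a in (0:ℝ)..u, g a * F (u - a) := by
    intro u hu
    have hu0 : (0:ℝ) < u := hu.1
    have hTmeas : MeasurableSet (Set.Ioc (0:ℝ) u) := measurableSet_Ioc
    set ν : Measure ℝ := volume.restrict (Set.Ioc (0:ℝ) u) with hνdef
    have hUopen : IsOpen {p : ℝ × ℝ | 0 < p.2 ∧ p.2 < p.1} :=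
      (isOpen_lt continuous_const continuous_snd).inter (isOpen_lt continuous_snd continuous_fst)
    have hKuncurry : ∀ p : ℝ × ℝ, Function.uncurry K p
        = Set.indicator {p : ℝ × ℝ | 0 < p.2 ∧ p.2 < p.1} (fun p => g p.2 * f (p.1 - p.2)) p := by
      rintro ⟨s, a⟩
      simp only [Function.uncurry, hKdef, Set.indicator_apply, Set.mem_Ioo, Set.mem_setOf_eq]
    have hhcont : ContinuousOn (fun p : ℝ × ℝ => g p.2 * f (p.1 - p.2))
        {p : ℝ × ℝ | 0 < p.2 ∧ p.2 < p.1} := by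
      apply ContinuousOn.mul
      · exact hg_cont.comp continuous_snd.continuousOn (fun p hp => le_of_lt hp.1)
      · exact hf_cont.comp (continuous_fst.sub continuous_snd).continuousOn
          (fun p hp => sub_nonneg.mpr (le_of_lt hp.2))
    have hKjm : AEStronglyMeasurable (Function.uncurry K) (ν.prod ν) := by
      have h : AEStronglyMeasurable
          (Set.indicator {p : ℝ × ℝ | 0 < p.2 ∧ p.2 < p.1} (fun p => g p.2 * f (p.1 - p.2)))
          (ν.prod ν) :=
        (aestronglyMeasurable_indicator_iff hUopen.measurableSet).mpr
          (hhcont.aestronglyMeasurable hUopen.measurableSet)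
      exact h.congr (Filter.Eventually.of_forall fun p => (hKuncurry p).symm)
    have hmemae : ∀ᵐ p ∂(ν.prod ν), p ∈ Set.Ioc (0:ℝ) u ×ˢ Set.Ioc (0:ℝ) u := by
      rw [hνdef, Measure.prod_restrict]
      exact ae_restrict_mem (hTmeas.prod hTmeas)
    have hKint : Integrable (Function.uncurry K) (ν.prod ν) := by
      refine Integrable.mono' (g := fun _ => Cg * M) ?_ hKjm ?_
      · rw [hνdef, Measure.prod_restrict]
        refine integrableOn_const (ne_of_lt ?_)
        rw [Measure.prod_prod]
        exact ENNReal.mul_lt_top measure_Ioc_lt_top measure_Ioc_lt_top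
      · refine hmemae.mono fun p hp => ?_
        rw [hKuncurry p]
        by_cases hpU : p ∈ {p : ℝ × ℝ | 0 < p.2 ∧ p.2 < p.1}
        · rw [Set.indicator_of_mem hpU]
          have h2 : p.2 ∈ Set.Icc (0:ℝ) (t+1) := ⟨hpU.1.le, hp.2.2.trans hu.2.le⟩
          have hsa : 0 ≤ p.1 - p.2 := sub_nonneg.mpr hpU.2.le
          have h3 : ‖f (p.1 - p.2)‖ ≤ M := by
            rw [Real.norm_eq_abs, abs_of_nonneg (hf_nonneg _ hsa)]; exact hfM _ hsa
          calc ‖g p.2 * f (p.1 - p.2)‖ = ‖g p.2‖ * ‖f (p.1 - p.2)‖ := norm_mul _ _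
            _ ≤ Cg * M := mul_le_mul (hCg _ h2) h3 (norm_nonneg _) hCg0
        · rw [Set.indicator_of_notMem hpU]
          simp only [norm_zero]
          positivity
    have hswap := MeasureTheory.integral_integral_swap hKint
    have hL : (∫ s, (∫ a, K s a ∂ν) ∂ν) = ∫ s in (0:ℝ)..u, C s := by
      rw [intervalIntegral.integral_of_le hu0.le]
      refine setIntegral_congr_fun hTmeas fun s hs => ?_
      have hsub : Set.Ioo 0 s ⊆ Set.Ioc (0:ℝ) u := fun z hz =>
        ⟨hz.1, (le_of_lt hz.2).trans hs.2⟩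
      rw [hCK s hs.1]
      simp only [hKdef]
      rw [MeasureTheory.integral_indicator measurableSet_Ioo,
        MeasureTheory.integral_indicator measurableSet_Ioo, hνdef,
        Measure.restrict_restrict measurableSet_Ioo, Set.inter_eq_left.mpr hsub]
    have hR : (∫ a, (∫ s, K s a ∂ν) ∂ν) = ∫ a in (0:ℝ)..u, g a * F (u - a) := by
      rw [intervalIntegral.integral_of_le hu0.le]
      refine setIntegral_congr_fun hTmeas fun a ha => ?_
      have hrew : ∀ s : ℝ, K s a = (Set.Ioi a).indicator (fun s => g a * f (s - a)) s := by
        intro s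
        simp only [hKdef, Set.indicator_apply, Set.mem_Ioo, Set.mem_Ioi]
        by_cases h : a < s
        · simp [h, ha.1]
        · simp [h]
      have hseteq : Set.Ioi a ∩ Set.Ioc 0 u = Set.Ioc a u := by
        ext s
        simp only [Set.mem_inter_iff, Set.mem_Ioi, Set.mem_Ioc]
        constructor
        · rintro ⟨h1, _, h3⟩; exact ⟨h1, h3⟩
        · rintro ⟨h1, h2⟩; exact ⟨h1, ha.1.trans h1, h2⟩
      calc (∫ s, K s a ∂ν) = ∫ s, (Set.Ioi a).indicator (fun s => g a * f (s - a)) s ∂ν :=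
            integral_congr_ae (Filter.Eventually.of_forall hrew)
        _ = ∫ s in Set.Ioc a u, g a * f (s - a) := by
            rw [MeasureTheory.integral_indicator measurableSet_Ioi, hνdef,
              Measure.restrict_restrict measurableSet_Ioi, hseteq]
        _ = g a * ∫ s in a..u, f (s - a) := by
            rw [← intervalIntegral.integral_of_le ha.2, ← intervalIntegral.integral_const_mul]
        _ = g a * F (u - a) := by
            rw [intervalIntegral.integral_comp_sub_right f a]
            simp only [sub_self]
            rw [hFdef (u - a)]
    rw [← hL, ← hR]; exact hswap
  have hDinti : IntervalIntegrable (fun s => g s - C s) volume 0 t :=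
    (hginti t ht.le).sub (hCinti t ⟨ht, by linarith⟩)
  have hDmeas : StronglyMeasurableAtFilter (fun s => g s - C s) (𝓝 t) volume := by
    refine ContinuousOn.stronglyMeasurableAtFilter (s := Set.Ioo 0 (t+1)) isOpen_Ioo ?_ t
      ⟨ht, by linarith⟩
    exact fun s hs => ((hg_cont.continuousAt (Ici_mem_nhds hs.1)).sub
      (hCcont s hs)).continuousWithinAt
  have hDcont : ContinuousAt (fun s => g s - C s) t :=
    (hg_cont.continuousAt (Ici_mem_nhds ht)).sub (hCcont t ⟨ht, by linarith⟩)
  have hftc : HasDerivAt (fun u => ∫ s in (0:ℝ)..u, (g s - C s)) (g t - C t) t :=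
    intervalIntegral.integral_hasDerivAt_right hDinti hDmeas hDcont
  have hAid : ∀ u ∈ Set.Ioo (0:ℝ) (t+1),
      (∫ a in (0:ℝ)..u, g (u - a) * ξ a) = ∫ s in (0:ℝ)..u, (g s - C s) := by
    intro u hu
    have hu0 : (0:ℝ) < u := hu.1
    have h1 : (∫ a in (0:ℝ)..u, g (u - a) * ξ a) = ∫ a in (0:ℝ)..u, g a * ξ (u - a) := by
      have h := intervalIntegral.integral_comp_sub_left (a := 0) (b := u)
        (fun y => g y * ξ (u - y)) u
      simpa [sub_sub_cancel] using h
    have hFcont : ContinuousOn F (Set.Icc 0 u) := by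
      have h := intervalIntegral.continuousOn_primitive (μ := volume) (f := f) (a := 0) (b := u)
        ((integrableOn_Icc_iff_integrableOn_Ioc (by simp)).mpr (hf_int.mono_set Set.Ioc_subset_Ioi_self))
      exact h.congr fun x hx => by rw [hFdef x, intervalIntegral.integral_of_le hx.1]
    have hgF_inti : IntervalIntegrable (fun a => g a * F (u - a)) volume 0 u := by
      apply ContinuousOn.intervalIntegrable
      rw [Set.uIcc_of_le hu0.le]
      exact (hg_cont.mono fun z hz => hz.1).mul
        (hFcont.comp ((continuous_const.sub continuous_id).continuousOn)
          (fun a ha => ⟨sub_nonneg.mpr ha.2, by linarith [ha.1]⟩))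
    calc (∫ a in (0:ℝ)..u, g (u - a) * ξ a) = ∫ a in (0:ℝ)..u, g a * ξ (u - a) := h1
      _ = ∫ a in (0:ℝ)..u, (g a - g a * F (u - a)) := by
          refine intervalIntegral.integral_congr fun a ha => ?_
          rw [Set.uIcc_of_le hu0.le] at ha
          rw [hξF (u - a) (sub_nonneg.mpr ha.2)]; ring
      _ = (∫ a in (0:ℝ)..u, g a) - ∫ a in (0:ℝ)..u, g a * F (u - a) :=
          intervalIntegral.integral_sub (hginti u hu0.le) hgF_inti
      _ = (∫ a in (0:ℝ)..u, g a) - ∫ s in (0:ℝ)..u, C s := by rw [hfub u hu]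
      _ = ∫ s in (0:ℝ)..u, (g s - C s) :=
          (intervalIntegral.integral_sub (hginti u hu0.le) (hCinti u hu)).symm
  have hA : HasDerivAt (fun u => ∫ a in (0:ℝ)..u, g (u - a) * ξ a) (g t - C t) t :=
    hftc.congr_of_eventuallyEq
      (Filter.eventually_of_mem (Ioo_mem_nhds ht (by linarith)) fun u hu => hAid u hu)
  exact hA

set_option maxHeartbeats 1000000 in
/-- Differentiating the representation
`I(t) = ∫₀ᵗ τσ(t−a)ξ(a) da + ∫ₜ^∞ φ(a−t)ξ(a)/ξ(a−t) da` of the infected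
population (with survival function `ξ(a) = ∫ₐ^∞ f`) yields
`I'(t) = τσ(t) − ∫₀ᵗ τσ(t−a)f(a) da − ∫ₜ^∞ φ(a−t)f(a)/ξ(a−t) da`. -/
theorem infected_representation_derivative
    (τ : ℝ) (hτ : 0 < τ)
    (f : ℝ → ℝ) (hf_cont : ContinuousOn f (Set.Ici 0))
    (hf_nonneg : ∀ a ≥ (0:ℝ), 0 ≤ f a)
    (hf_bdd : ∃ M : ℝ, ∀ a ≥ (0:ℝ), f a ≤ M)
    (hf_int : IntegrableOn f (Set.Ioi 0))
    (hf_one : ∫ a in Set.Ioi (0:ℝ), f a = 1)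
    (ξ : ℝ → ℝ) (hξ : ∀ a : ℝ, ξ a = ∫ q in Set.Ioi a, f q)
    (hξ_pos : ∀ a ≥ (0:ℝ), 0 < ξ a)
    (σ : ℝ → ℝ) (hσ_cont : ContinuousOn σ (Set.Ici 0))
    (φ : ℝ → ℝ) (hφ_cont : ContinuousOn φ (Set.Ici 0))
    (hφ_nonneg : ∀ b ≥ (0:ℝ), 0 ≤ φ b)
    (hφ_int : IntegrableOn (fun b => φ b / ξ b) (Set.Ioi 0))
    (I : ℝ → ℝ)
    (hI : ∀ t : ℝ, I t =
      (∫ a in (0:ℝ)..t, τ * σ (t - a) * ξ a)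
        + ∫ a in Set.Ioi t, φ (a - t) * ξ a / ξ (a - t)) :
    ∀ t > (0:ℝ), HasDerivAt I
      (τ * σ t - (∫ a in (0:ℝ)..t, τ * σ (t - a) * f a)
        - ∫ a in Set.Ioi t, φ (a - t) * f a / ξ (a - t)) t := by
  intro t ht
  obtain ⟨M₀, hM₀⟩ := hf_bdd
  set M : ℝ := max M₀ 0 with hMdef
  have hM0 : (0:ℝ) ≤ M := le_max_right _ _
  have hfM : ∀ a : ℝ, 0 ≤ a → f a ≤ M := fun a ha => (hM₀ a ha).trans (le_max_left _ _)
  have hg_cont : ContinuousOn (fun a => τ * σ a) (Set.Ici 0) := continuousOn_const.mul hσ_cont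
  have hfi : ∀ x y : ℝ, 0 ≤ x → 0 ≤ y → IntervalIntegrable f volume x y := by
    intro x y hx hy
    rw [intervalIntegrable_iff]
    exact hf_int.mono_set
      (Set.Ioc_subset_Ioi_self.trans (Set.Ioi_subset_Ioi (le_inf hx hy)))
  set F : ℝ → ℝ := fun u => ∫ s in (0:ℝ)..u, f s with hFdef
  have hF_nonneg : ∀ x : ℝ, 0 ≤ x → 0 ≤ F x := fun x hx =>
    intervalIntegral.integral_nonneg hx (fun u hu => hf_nonneg u hu.1)
  have hξF : ∀ x : ℝ, 0 ≤ x → ξ x = 1 - F x := by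
    intro x hx
    have h1 : IntegrableOn f (Set.Ioc 0 x) := hf_int.mono_set Set.Ioc_subset_Ioi_self
    have h2 : IntegrableOn f (Set.Ioi x) := hf_int.mono_set (Set.Ioi_subset_Ioi hx)
    have hsplit : (∫ a in Set.Ioi (0:ℝ), f a)
        = (∫ a in Set.Ioc 0 x, f a) + ∫ a in Set.Ioi x, f a := by
      rw [← Set.Ioc_union_Ioi_eq_Ioi hx]
      exact setIntegral_union (Set.Ioc_disjoint_Ioi le_rfl) measurableSet_Ioi h1 h2
    have hFx : F x = ∫ a in Set.Ioc 0 x, f a := intervalIntegral.integral_of_le hx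
    rw [hξ x, hFx]
    linarith [hsplit, hf_one]
  have hξd : ∀ x : ℝ, 0 < x → HasDerivAt ξ (-f x) x := by
    intro x hx
    have hmeasf : StronglyMeasurableAtFilter f (𝓝 x) volume :=
      ContinuousOn.stronglyMeasurableAtFilter isOpen_Ioi
        (hf_cont.mono Set.Ioi_subset_Ici_self) x hx
    have hFd : HasDerivAt F (f x) x :=
      intervalIntegral.integral_hasDerivAt_right (hfi 0 x le_rfl hx.le) hmeasf
        (hf_cont.continuousAt (Ici_mem_nhds hx))
    have h1 : HasDerivAt (fun y => 1 - F y) (-f x) x := hFd.const_sub 1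
    exact h1.congr_of_eventuallyEq <|
      Filter.eventuallyEq_of_mem (Ioi_mem_nhds hx) (fun y hy => hξF y (le_of_lt hy))
  have hξc : ContinuousOn ξ (Set.Ioi 0) := fun x hx =>
    ((hξd x hx).continuousAt).continuousWithinAt
  have hξ_le_one : ∀ x : ℝ, 0 ≤ x → ξ x ≤ 1 := by
    intro x hx; rw [hξF x hx]; linarith [hF_nonneg x hx]
  -- shift identities
  have hμ : ∀ s : ℝ, (∫ a in Set.Ioi s, φ (a - s) * ξ a / ξ (a - s))
      = ∫ b in Set.Ioi (0:ℝ), φ b / ξ b * ξ (b + s) := by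
    intro s
    rw [integral_Ioi_shift (fun a => φ (a - s) * ξ a / ξ (a - s)) s]
    exact integral_congr_ae (Filter.Eventually.of_forall fun b => by
      simp only [add_sub_cancel_right, mul_div_right_comm])
  have hμ' : ∀ s : ℝ, (∫ a in Set.Ioi s, φ (a - s) * f a / ξ (a - s))
      = ∫ b in Set.Ioi (0:ℝ), φ b / ξ b * f (b + s) := by
    intro s
    rw [integral_Ioi_shift (fun a => φ (a - s) * f a / ξ (a - s)) s]
    exact integral_congr_ae (Filter.Eventually.of_forall fun b => by
      simp only [add_sub_cancel_right, mul_div_right_comm])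
  -- the two derivative results
  have hB := tail_deriv f ξ φ M hM0 hfM hf_cont hf_nonneg hξ_pos hξ_le_one hξd hξc
    hφ_cont hφ_nonneg hφ_int t ht
  have hA := conv_deriv f (fun a => τ * σ a) ξ F M hM0 hfM hf_cont hf_nonneg hf_int
    hg_cont (fun u => rfl) hξF t ht
  have hA2 : HasDerivAt (fun u => ∫ a in (0:ℝ)..u, τ * σ (u - a) * ξ a)
      (τ * σ t - ∫ a in (0:ℝ)..t, τ * σ a * f (t - a)) t := hA
  have hB2 : HasDerivAt (fun s => ∫ a in Set.Ioi s, φ (a - s) * ξ a / ξ (a - s))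
      (∫ b in Set.Ioi (0:ℝ), -(φ b / ξ b * f (b + t))) t :=
    hB.congr_of_eventuallyEq (Filter.Eventually.of_forall fun s => hμ s)
  have hsum := hA2.add hB2
  have hIderiv := hsum.congr_of_eventuallyEq (Filter.Eventually.of_forall fun u => hI u)
  refine hIderiv.congr_deriv ?_
  have hCt : (∫ a in (0:ℝ)..t, τ * σ a * f (t - a))
      = ∫ a in (0:ℝ)..t, τ * σ (t - a) * f a := by
    have h := intervalIntegral.integral_comp_sub_left (a := 0) (b := t)
      (fun y => τ * σ (t - y) * f y) t
    simpa [sub_sub_cancel] using h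
  have hTail : (∫ b in Set.Ioi (0:ℝ), -(φ b / ξ b * f (b + t)))
      = -∫ a in Set.Ioi t, φ (a - t) * f a / ξ (a - t) := by
    rw [hμ' t]
    exact MeasureTheory.integral_neg _
  rw [hCt, hTail]
  ring
end
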